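/- Let 0 < μ < 1 and x > 0. Then (1/2π) ∫_ℝ e^{-|k|^μ} e^{-ikx} dk = (1/π) Σ_{n=1}^∞ ((-1)^{n+1}/n!) · sin(πμn/2) · Γ(μn+1) · x^{-(μn+1)}, where the series on the right-hand side converges absolutely. -/

import Mathlib

open MeasureTheory Real Set Filter Topology

namespace StableAux

/-- Integrability of `t^(s-1) e^{-rt}` on `(0,∞)` for real `r>0`. -/
lemma integrableOn_rpow_exp {s r : ℝ} (hs : 0 < s) (hr : 0 < r) :
    IntegrableOn (fun t : ℝ => t ^ (s - 1) * Real.exp (-(r * t))) (Ioi 0) := by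
  have h0 := Real.GammaIntegral_convergent hs
  have h1 : IntegrableOn (fun t : ℝ => Real.exp (-(r * t)) * (r * t) ^ (s - 1)) (Ioi 0) := by
    have := (integrableOn_Ioi_comp_mul_left_iff
      (fun x : ℝ => Real.exp (-x) * x ^ (s - 1)) 0 hr).2 (by simpa using h0)
    simpa using this
  have h2 : IntegrableOn (fun t : ℝ =>
      (r ^ (s - 1))⁻¹ * (Real.exp (-(r * t)) * (r * t) ^ (s - 1))) (Ioi 0) :=
    h1.const_mul _
  refine h2.congr_fun (fun t ht => ?_) measurableSet_Ioi
  simp only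
  rw [Real.mul_rpow hr.le (le_of_lt ht)]
  field_simp [(Real.rpow_pos_of_pos hr (s-1)).ne']

/-- Integrability of `t^(s-1) e^{-zt}` on `(0,∞)` for complex `z` with positive real part. -/
lemma integrableOn_cpow_exp {s : ℝ} (hs : 0 < s) {z : ℂ} (hz : 0 < z.re) :
    IntegrableOn (fun t : ℝ => (t : ℂ) ^ ((s : ℂ) - 1) * Complex.exp (-(z * t))) (Ioi 0) := by
  have hb := integrableOn_rpow_exp hs hz
  have hmeas : AEStronglyMeasurable
      (fun t : ℝ => (t : ℂ) ^ ((s : ℂ) - 1) * Complex.exp (-(z * t)))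
      (volume.restrict (Ioi 0)) := by
    refine ContinuousOn.aestronglyMeasurable (fun t ht => ?_) measurableSet_Ioi
    have h1 : ContinuousAt (fun t : ℝ => (t : ℂ) ^ ((s : ℂ) - 1)) t := by
      refine (continuousAt_cpow_const ?_).comp Complex.continuous_ofReal.continuousAt
      exact Complex.mem_slitPlane_iff.2 (Or.inl (by simpa using ht))
    exact (h1.mul ((Complex.continuous_exp.continuousAt).comp
      (by fun_prop : ContinuousAt (fun t : ℝ => -(z * t)) t))).continuousWithinAt
  refine Integrable.mono' hb hmeas ?_
  filter_upwards [self_mem_ae_restrict measurableSet_Ioi] with t ht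
  rw [mem_Ioi] at ht
  rw [norm_mul,
    Complex.norm_cpow_eq_rpow_re_of_pos ht, Complex.norm_exp]
  simp only [Complex.sub_re, Complex.ofReal_re, Complex.one_re, Complex.neg_re,
    Complex.mul_re, Complex.ofReal_im, mul_zero, sub_zero]
  exact le_of_eq rfl


lemma aesm_cpow_exp (s : ℝ) (z : ℂ) :
    AEStronglyMeasurable
      (fun t : ℝ => (t : ℂ) ^ ((s : ℂ) - 1) * (Complex.exp (-(z * t)) * -(t : ℂ)))
      (volume.restrict (Ioi 0)) := by
  refine ContinuousOn.aestronglyMeasurable (fun t ht => ?_) measurableSet_Ioi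
  have h1 : ContinuousAt (fun t : ℝ => (t : ℂ) ^ ((s : ℂ) - 1)) t := by
    refine (continuousAt_cpow_const ?_).comp Complex.continuous_ofReal.continuousAt
    exact Complex.mem_slitPlane_iff.2 (Or.inl (by simpa using ht))
  exact (h1.mul (((Complex.continuous_exp.continuousAt).comp
    (by fun_prop : ContinuousAt (fun t : ℝ => -(z * t)) t)).mul
      (by fun_prop))).continuousWithinAt

/-- The Gamma integral with complex rate `z`, `Re z > 0`. -/
lemma gamma_complex {s : ℝ} (hs : 0 < s) : ∀ {z : ℂ}, 0 < z.re →
    ∫ t in Ioi (0:ℝ), (t : ℂ) ^ ((s:ℂ) - 1) * Complex.exp (-(z * t)) =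
      (Real.Gamma s : ℂ) * z ^ (-(s:ℂ)) := by
  set U : Set ℂ := {w | 0 < w.re} with hU
  set G : ℂ → ℂ := fun w => ∫ t in Ioi (0:ℝ), (t : ℂ) ^ ((s:ℂ) - 1) * Complex.exp (-(w * t))
    with hG
  set g : ℂ → ℂ := fun w => (Real.Gamma s : ℂ) * w ^ (-(s:ℂ)) with hg
  have hUopen : IsOpen U := isOpen_lt continuous_const Complex.continuous_re
  have hUconn : IsPreconnected U := (convex_halfSpace_re_gt 0).isPreconnected
  have hGdiff : DifferentiableOn ℂ G U := by
    intro w₀ hw₀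
    have hw₀re : 0 < w₀.re := hw₀
    set ε : ℝ := w₀.re / 2 with hε
    have hεpos : 0 < ε := by positivity
    have key := hasDerivAt_integral_of_dominated_loc_of_deriv_le (μ := volume.restrict (Ioi 0))
      (F := fun w (t : ℝ) => (t : ℂ) ^ ((s:ℂ) - 1) * Complex.exp (-(w * t)))
      (F' := fun w (t : ℝ) => (t : ℂ) ^ ((s:ℂ) - 1) * (Complex.exp (-(w * t)) * -(t:ℂ)))
      (x₀ := w₀) (bound := fun t : ℝ => t ^ (s + 1 - 1) * Real.exp (-(ε * t)))
      (Metric.ball_mem_nhds w₀ hεpos) ?_ ?_ ?_ ?_ ?_ ?_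
    · exact key.2.differentiableAt.differentiableWithinAt
    · filter_upwards with w
      refine ContinuousOn.aestronglyMeasurable (fun t ht => ?_) measurableSet_Ioi
      have h1 : ContinuousAt (fun t : ℝ => (t : ℂ) ^ ((s : ℂ) - 1)) t := by
        refine (continuousAt_cpow_const ?_).comp Complex.continuous_ofReal.continuousAt
        exact Complex.mem_slitPlane_iff.2 (Or.inl (by simpa using ht))
      exact (h1.mul ((Complex.continuous_exp.continuousAt).comp
        (by fun_prop : ContinuousAt (fun t : ℝ => -(w * t)) t))).continuousWithinAt
    · exact integrableOn_cpow_exp hs hw₀re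
    · exact aesm_cpow_exp s w₀
    · filter_upwards [self_mem_ae_restrict measurableSet_Ioi] with t ht w hw
      rw [mem_Ioi] at ht
      rw [Metric.mem_ball, Complex.dist_eq] at hw
      have hre : ε ≤ w.re := by
        have h1 : |(w - w₀).re| ≤ ‖w - w₀‖ := Complex.abs_re_le_norm _
        have h2 : |w.re - w₀.re| ≤ ‖w - w₀‖ := by
          simpa [Complex.sub_re] using h1
        have := abs_le.1 h2
        have := this.1
        linarith [hw]
      rw [norm_mul, norm_mul,
        Complex.norm_cpow_eq_rpow_re_of_pos ht, Complex.norm_exp]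
      have h3 : ‖-(t:ℂ)‖ = t := by
        simpa using abs_of_pos ht
      rw [h3]
      have h4 : (-(w * (t:ℂ))).re = -(w.re * t) := by
        simp [Complex.mul_re]
      rw [h4]
      have h5 : ((s:ℂ) - 1).re = s - 1 := by simp
      rw [h5]
      have h6 : Real.exp (-(w.re * t)) ≤ Real.exp (-(ε * t)) := by
        apply Real.exp_le_exp.2
        nlinarith
      calc t ^ (s - 1) * (Real.exp (-(w.re * t)) * t)
          ≤ t ^ (s - 1) * (Real.exp (-(ε * t)) * t) := by
            apply mul_le_mul_of_nonneg_left _ (Real.rpow_nonneg ht.le _)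
            exact mul_le_mul_of_nonneg_right h6 ht.le
        _ = t ^ (s + 1 - 1) * Real.exp (-(ε * t)) := by
            rw [show s + 1 - 1 = (s - 1) + 1 by ring, Real.rpow_add ht, Real.rpow_one]
            ring
    · exact integrableOn_rpow_exp (by linarith) hεpos
    · filter_upwards [self_mem_ae_restrict measurableSet_Ioi] with t ht w hw
      have h1 : HasDerivAt (fun w : ℂ => -(w * t)) (-(t:ℂ)) w := by
        exact (hasDerivAt_mul_const (t:ℂ)).neg
      have h2 := h1.cexp
      simpa using h2.const_mul ((t : ℂ) ^ ((s:ℂ) - 1))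
  have hgdiff : DifferentiableOn ℂ g U := by
    intro w hw
    refine DifferentiableAt.differentiableWithinAt ?_
    refine (DifferentiableAt.cpow differentiableAt_id (differentiableAt_const _) ?_).const_mul _
    exact Complex.mem_slitPlane_iff.2 (Or.inl hw)
  have hre : ∀ r : ℝ, 0 < r → G r = g r := by
    intro r hr
    have := Complex.integral_cpow_mul_exp_neg_mul_Ioi
      (a := (s:ℂ)) (r := r) (by simpa using hs) hr
    rw [hG]
    simp only
    rw [this, hg]
    simp only
    rw [Complex.Gamma_ofReal, one_div, Complex.inv_cpow _ _ (by
      rw [Complex.arg_ofReal_of_nonneg hr.le]; exact Real.pi_ne_zero.symm),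
      ← Complex.cpow_neg, mul_comm]
  have hfreq : ∃ᶠ w in 𝓝[≠] (1:ℂ), G w = g w := by
    have htend : Tendsto (fun n : ℕ => ((1 + ((n:ℝ)+1)⁻¹ : ℝ) : ℂ)) atTop (𝓝[≠] 1) := by
      refine tendsto_nhdsWithin_of_tendsto_nhds_of_eventually_within _ ?_ ?_
      · have hv : Tendsto (fun n : ℕ => (1 + ((n:ℝ)+1)⁻¹ : ℝ)) atTop (𝓝 1) := by
          have := tendsto_one_div_add_atTop_nhds_zero_nat (𝕜 := ℝ)
          simpa [one_div] using tendsto_const_nhds.add this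
        have h := (Complex.continuous_ofReal.tendsto 1).comp hv
        simp only [Complex.ofReal_one] at h
        exact h
      · filter_upwards with n
        simp only [mem_compl_iff, mem_singleton_iff]
        rw [show (1:ℂ) = ((1:ℝ):ℂ) by norm_num, Complex.ofReal_inj]
        have : (0:ℝ) < ((n:ℝ)+1)⁻¹ := by positivity
        intro h; linarith [h]
    exact htend.frequently (Frequently.of_forall (fun n => hre _ (by positivity)))
  intro z hz
  have := (hGdiff.analyticOnNhd hUopen).eqOn_of_preconnected_of_frequently_eq
    (hgdiff.analyticOnNhd hUopen) hUconn (show (1:ℂ) ∈ U by simp [hU]) hfreq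
  exact this hz
lemma gamma_le_fact_rpow {μ : ℝ} (hμ0 : 0 < μ) (hμ1 : μ < 1) (n : ℕ) :
    Real.Gamma (μ * n + 1) ≤ ((n.factorial : ℝ)) ^ μ := by
  have h := Real.Gamma_mul_add_mul_le_rpow_Gamma_mul_rpow_Gamma
    (s := (n:ℝ) + 1) (t := 1) (a := μ) (b := 1 - μ)
    (by positivity) one_pos hμ0 (by linarith) (by ring)
  rw [Real.Gamma_one, Real.Gamma_nat_eq_factorial, Real.one_rpow] at h
  calc Real.Gamma (μ * n + 1) = Real.Gamma (μ * ((n:ℝ) + 1) + (1 - μ) * 1) := by ring_nf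
    _ ≤ ((n.factorial : ℝ)) ^ μ * 1 := h
    _ = ((n.factorial : ℝ)) ^ μ := mul_one _

lemma summable_gamma_mul {μ : ℝ} (hμ0 : 0 < μ) (hμ1 : μ < 1) {C : ℝ} (hC : 0 < C) :
    Summable (fun n : ℕ => Real.Gamma (μ * n + 1) / n.factorial * C ^ n) := by
  have hb : Summable (fun n : ℕ => ((n.factorial : ℝ)) ^ μ / n.factorial * C ^ n) := by
    apply summable_of_ratio_norm_eventually_le (r := 1/2) (by norm_num)
    have htend : Tendsto (fun n : ℕ => (((n:ℝ)+1)) ^ (μ - 1) * C) atTop (𝓝 0) := by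
      have h1 : Tendsto (fun n : ℕ => ((n:ℝ)+1)) atTop atTop :=
        tendsto_atTop_add_const_right _ 1 tendsto_natCast_atTop_atTop
      have h2 := (tendsto_rpow_neg_atTop (y := 1 - μ) (by linarith)).comp h1
      have h3 : (fun n : ℕ => (((n:ℝ)+1)) ^ (μ - 1)) =
          (fun x : ℝ => x ^ (-(1-μ))) ∘ (fun n : ℕ => ((n:ℝ)+1)) := by
        funext n; rw [Function.comp_apply, show μ - 1 = -(1-μ) by ring]
      rw [show (0:ℝ) = 0 * C by ring]
      exact Tendsto.mul_const C (h3 ▸ h2)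
    have hev : ∀ᶠ n : ℕ in atTop, (((n:ℝ)+1)) ^ (μ - 1) * C ≤ 1/2 :=
      htend.eventually_le_const (by norm_num)
    filter_upwards [hev] with n hn
    have hfpos : (0:ℝ) < n.factorial := by positivity
    have hstep : ((n+1).factorial : ℝ) ^ μ / (n+1).factorial * C ^ (n+1) =
        ((((n:ℝ)+1)) ^ (μ - 1) * C) * (((n.factorial : ℝ)) ^ μ / n.factorial * C ^ n) := by
      rw [Nat.factorial_succ]
      push_cast
      rw [Real.mul_rpow (by positivity) (by positivity),
        Real.rpow_sub (by positivity), Real.rpow_one, pow_succ]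
      field_simp
    rw [Real.norm_of_nonneg (by positivity), Real.norm_of_nonneg (by positivity), hstep]
    have hnn : (0:ℝ) ≤ ((n.factorial : ℝ)) ^ μ / n.factorial * C ^ n := by positivity
    nlinarith [hnn, hn, mul_le_mul_of_nonneg_right hn hnn]
  refine Summable.of_nonneg_of_le (fun n => by positivity) (fun n => ?_) hb
  gcongr
  exact gamma_le_fact_rpow hμ0 hμ1 n

lemma series_rep {μ : ℝ} (hμ0 : 0 < μ) (hμ1 : μ < 1) {z : ℂ} (hz : 0 < z.re) :
    ∫ t in Ioi (0:ℝ), Complex.exp (-((t ^ μ : ℝ) : ℂ)) * Complex.exp (-(z * t)) =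
      ∑' n : ℕ, (((-1:ℝ) ^ n * Real.Gamma (μ * n + 1) / n.factorial : ℝ) : ℂ) *
        z ^ (-((μ * n + 1 : ℝ) : ℂ)) := by
  set r : ℝ := z.re with hr
  have hrpos : 0 < r := hz
  set f : ℕ → ℝ → ℂ := fun n t =>
    (((-1:ℝ) ^ n / n.factorial : ℝ) : ℂ) *
      ((t:ℂ) ^ (((μ * n + 1 : ℝ) : ℂ) - 1) * Complex.exp (-(z * t))) with hf
  have hspos : ∀ n : ℕ, (0:ℝ) < μ * n + 1 := fun n => by positivity
  have hInt : ∀ n, Integrable (f n) (volume.restrict (Ioi 0)) := fun n =>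
    (integrableOn_cpow_exp (hspos n) hz).const_mul _
  have hnorm : ∀ n, ∀ t ∈ Ioi (0:ℝ), ‖f n t‖ =
      ((n.factorial : ℝ))⁻¹ * (t ^ ((μ * n + 1) - 1) * Real.exp (-(r * t))) := by
    intro n t ht
    rw [mem_Ioi] at ht
    rw [hf]
    simp only
    rw [norm_mul, norm_mul,
      Complex.norm_real, Real.norm_eq_abs, Complex.norm_cpow_eq_rpow_re_of_pos ht, Complex.norm_exp]
    have h4 : (-(z * (t:ℂ))).re = -(r * t) := by simp [Complex.mul_re, hr]
    have h5 : ((((μ * n + 1 : ℝ)) : ℂ) - 1).re = (μ * n + 1) - 1 := by simp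
    rw [h4, h5, abs_div, abs_pow, abs_neg, abs_one, one_pow, Nat.abs_cast, one_div]
  have hIntNorm : ∀ n, ∫ t in Ioi (0:ℝ), ‖f n t‖ =
      ((n.factorial : ℝ))⁻¹ * ((1 / r) ^ (μ * n + 1) * Real.Gamma (μ * n + 1)) := by
    intro n
    rw [setIntegral_congr_fun measurableSet_Ioi (hnorm n), integral_const_mul,
      integral_rpow_mul_exp_neg_mul_Ioi (hspos n) hrpos]
  have hSum : Summable (fun n => ∫ t in Ioi (0:ℝ), ‖f n t‖) := by
    have hbase : Summable (fun n : ℕ =>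
        Real.Gamma (μ * n + 1) / n.factorial * ((1/r) ^ μ) ^ n * (1/r)) :=
      (summable_gamma_mul hμ0 hμ1 (Real.rpow_pos_of_pos (by positivity) μ)).mul_right _
    refine hbase.congr (fun n => ?_)
    rw [hIntNorm n]
    rw [show (1/r) ^ (μ * n + 1) = ((1/r) ^ μ) ^ n * (1/r) by
      rw [Real.rpow_add (by positivity), Real.rpow_one, ← Real.rpow_natCast ((1/r) ^ μ) n,
        ← Real.rpow_mul (by positivity)]]
    field_simp
  have hpt : ∀ t ∈ Ioi (0:ℝ), ∑' n, f n t =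
      Complex.exp (-((t ^ μ : ℝ) : ℂ)) * Complex.exp (-(z * t)) := by
    intro t ht
    rw [mem_Ioi] at ht
    have hterm : ∀ n : ℕ, f n t =
        (-((t ^ μ : ℝ) : ℂ)) ^ n / n.factorial * Complex.exp (-(z * t)) := by
      intro n
      rw [hf]
      simp only
      have h1 : (((μ * n + 1 : ℝ)) : ℂ) - 1 = ((μ * n : ℝ) : ℂ) := by push_cast; ring
      rw [h1, ← Complex.ofReal_cpow ht.le]
      have h2 : t ^ (μ * (n:ℝ)) = (t ^ μ) ^ n := by
        rw [Real.rpow_mul ht.le, Real.rpow_natCast]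
      rw [h2]
      push_cast
      rw [neg_pow]
      ring
    rw [tsum_congr hterm, tsum_mul_right]
    congr 1
    rw [Complex.exp_eq_exp_ℂ, NormedSpace.exp_eq_tsum_div]
  calc ∫ t in Ioi (0:ℝ), Complex.exp (-((t ^ μ : ℝ) : ℂ)) * Complex.exp (-(z * t))
      = ∫ t in Ioi (0:ℝ), ∑' n, f n t :=
        (setIntegral_congr_fun measurableSet_Ioi hpt).symm
    _ = ∑' n, ∫ t in Ioi (0:ℝ), f n t :=
        (integral_tsum_of_summable_integral_norm hInt hSum).symm
    _ = ∑' n : ℕ, (((-1:ℝ) ^ n * Real.Gamma (μ * n + 1) / n.factorial : ℝ) : ℂ) *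
        z ^ (-((μ * n + 1 : ℝ) : ℂ)) := by
      refine tsum_congr (fun n => ?_)
      rw [hf]
      simp only
      rw [integral_const_mul, gamma_complex (hspos n) hz]
      push_cast
      ring

lemma integrableOn_exp_neg_rpow {μ : ℝ} (hμ0 : 0 < μ) :
    IntegrableOn (fun t : ℝ => Real.exp (-(t ^ μ))) (Ioi 0) := by
  have h0 := Real.GammaIntegral_convergent (s := 1/μ) (by positivity)
  have h1 := (integrableOn_Ioi_comp_rpow_iff'
    (fun u : ℝ => Real.exp (-u) * u ^ (1/μ - 1)) (p := μ) hμ0.ne').2 h0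
  refine h1.congr_fun (fun t ht => ?_) measurableSet_Ioi
  rw [mem_Ioi] at ht
  simp only
  rw [smul_eq_mul, show (t ^ μ) ^ (1/μ - 1) = t ^ (1 - μ) by
      rw [← Real.rpow_mul ht.le]; congr 1; field_simp,
    show t ^ (μ - 1) * (Real.exp (-(t ^ μ)) * t ^ (1 - μ)) =
      t ^ (μ - 1) * t ^ (1 - μ) * Real.exp (-(t ^ μ)) by ring,
    ← Real.rpow_add ht]
  norm_num

lemma bound_summable {μ : ℝ} (hμ0 : 0 < μ) (hμ1 : μ < 1) {x : ℝ} (hx : 0 < x) :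
    Summable (fun n : ℕ => Real.Gamma (μ * n + 1) / n.factorial * x ^ (-(μ * n + 1))) := by
  have hbase : Summable (fun n : ℕ =>
      Real.Gamma (μ * n + 1) / n.factorial * ((1/x) ^ μ) ^ n * (1/x)) :=
    (summable_gamma_mul hμ0 hμ1 (Real.rpow_pos_of_pos (by positivity) μ)).mul_right _
  refine hbase.congr (fun n => ?_)
  rw [show x ^ (-(μ * n + 1)) = ((1/x) ^ μ) ^ n * (1/x) by
    rw [one_div, Real.inv_rpow hx.le, ← Real.rpow_natCast (x ^ μ)⁻¹ n, ← Real.inv_rpow hx.le,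
      ← Real.rpow_mul (by positivity), Real.inv_rpow hx.le, ← Real.rpow_neg hx.le,
      ← Real.rpow_neg_one x, ← Real.rpow_add hx]
    congr 1; ring]
  ring

lemma series_rep_limit {μ : ℝ} (hμ0 : 0 < μ) (hμ1 : μ < 1) {x : ℝ} (hx : 0 < x) :
    ∫ t in Ioi (0:ℝ), Complex.exp (-((t ^ μ : ℝ) : ℂ)) *
        Complex.exp (-((-Complex.I * x) * t)) =
      ∑' n : ℕ, (((-1:ℝ) ^ n * Real.Gamma (μ * n + 1) / n.factorial : ℝ) : ℂ) *
        (-Complex.I * x) ^ (-((μ * n + 1 : ℝ) : ℂ)) := by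
  set w : ℂ := -Complex.I * x with hw
  have hwim : w.im = -x := by simp [hw]
  have hwre : w.re = 0 := by simp [hw]
  have hwne : w ≠ 0 := fun h => by
    rw [h] at hwim; simp at hwim; linarith
  set zj : ℕ → ℂ := fun j => ((((j:ℝ)+1)⁻¹ : ℝ) : ℂ) + w with hzj
  have hzjre : ∀ j, (zj j).re = ((j:ℝ)+1)⁻¹ := by
    intro j
    rw [hzj]
    rw [Complex.add_re, Complex.ofReal_re, hwre, add_zero]
  have hzjrepos : ∀ j, 0 < (zj j).re := fun j => by rw [hzjre]; positivity
  have hzjim : ∀ j, (zj j).im = -x := by intro j; simp [hzj, hwim]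
  have hzjabs : ∀ j, x ≤ ‖zj j‖ := by
    intro j
    calc x = |(zj j).im| := by rw [hzjim]; rw [abs_neg, abs_of_pos hx]
      _ ≤ ‖zj j‖ := Complex.abs_im_le_norm _
  have hzjtend : Tendsto zj atTop (𝓝 w) := by
    have h1 : Tendsto (fun j : ℕ => (((j:ℝ)+1)⁻¹ : ℝ)) atTop (𝓝 0) := by
      have := tendsto_one_div_add_atTop_nhds_zero_nat (𝕜 := ℝ)
      simpa [one_div] using this
    have h2 := (Complex.continuous_ofReal.tendsto 0).comp h1
    simp only [Complex.ofReal_zero] at h2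
    have h3 := h2.add_const w
    rw [zero_add] at h3
    exact h3
  -- LHS convergence
  have hL : Tendsto (fun j : ℕ => ∫ t in Ioi (0:ℝ),
      Complex.exp (-((t ^ μ : ℝ) : ℂ)) * Complex.exp (-(zj j * t))) atTop
      (𝓝 (∫ t in Ioi (0:ℝ),
        Complex.exp (-((t ^ μ : ℝ) : ℂ)) * Complex.exp (-(w * t)))) := by
    refine tendsto_integral_of_dominated_convergence
      (fun t => Real.exp (-(t ^ μ))) ?_ (integrableOn_exp_neg_rpow hμ0) ?_ ?_
    · intro j
      refine ContinuousOn.aestronglyMeasurable (fun t ht => ?_) measurableSet_Ioi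
      rw [mem_Ioi] at ht
      have hc1 : ContinuousAt (fun t : ℝ => t ^ μ) t :=
        Real.continuousAt_rpow_const t μ (Or.inl ht.ne')
      exact (((Complex.continuous_exp.continuousAt).comp
        ((Complex.continuous_ofReal.continuousAt.comp hc1).neg)).mul
        ((Complex.continuous_exp.continuousAt).comp
          (by fun_prop : ContinuousAt (fun t : ℝ => -(zj j * t)) t))).continuousWithinAt
    · intro j
      filter_upwards [self_mem_ae_restrict measurableSet_Ioi] with t ht
      rw [mem_Ioi] at ht
      rw [norm_mul, Complex.norm_exp,
        Complex.norm_exp]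
      have h1 : (-((t ^ μ : ℝ) : ℂ)).re = -(t ^ μ) := by simp
      have h2 : (-(zj j * t)).re = -((zj j).re * t) := by simp [Complex.mul_re]
      rw [h1, h2]
      have : Real.exp (-((zj j).re * t)) ≤ 1 := by
        rw [Real.exp_le_one_iff]
        have := hzjrepos j
        nlinarith
      nlinarith [Real.exp_pos (-(t ^ μ)), Real.exp_nonneg (-((zj j).re * t))]
    · filter_upwards [self_mem_ae_restrict measurableSet_Ioi] with t ht
      refine Tendsto.const_mul _ ?_
      refine (Complex.continuous_exp.continuousAt.tendsto).comp ?_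
      have := (hzjtend.mul_const ((t:ℝ) : ℂ)).neg
      exact this
  -- RHS convergence
  have hR : Tendsto (fun j : ℕ => ∑' n : ℕ,
      (((-1:ℝ) ^ n * Real.Gamma (μ * n + 1) / n.factorial : ℝ) : ℂ) *
        (zj j) ^ (-((μ * n + 1 : ℝ) : ℂ))) atTop
      (𝓝 (∑' n : ℕ, (((-1:ℝ) ^ n * Real.Gamma (μ * n + 1) / n.factorial : ℝ) : ℂ) *
        w ^ (-((μ * n + 1 : ℝ) : ℂ)))) := by
    refine tendsto_tsum_of_dominated_convergence
      (bound := fun n : ℕ => Real.Gamma (μ * n + 1) / n.factorial * x ^ (-(μ * n + 1)))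
      (bound_summable hμ0 hμ1 hx) ?_ ?_
    · intro n
      refine Tendsto.const_mul _ ?_
      have hcont : ContinuousAt (fun y : ℂ => y ^ (-((μ * n + 1 : ℝ) : ℂ))) w :=
        continuousAt_cpow_const (Complex.mem_slitPlane_iff.2 (Or.inr (by
          rw [hwim]; exact neg_ne_zero.2 hx.ne')))
      exact hcont.tendsto.comp hzjtend
    · filter_upwards with j n
      have hzjne : zj j ≠ 0 := fun h => by
        have := hzjim j; rw [h] at this; simp at this; linarith
      rw [norm_mul, Complex.norm_real, Real.norm_eq_abs,
        Complex.norm_cpow_of_ne_zero hzjne]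
      have him : (-((μ * n + 1 : ℝ) : ℂ)).im = 0 := by simp
      have hre : (-((μ * n + 1 : ℝ) : ℂ)).re = -(μ * n + 1) := by simp
      rw [him, hre, mul_zero, Real.exp_zero, div_one]
      have h1 : |(-1:ℝ) ^ n * Real.Gamma (μ * n + 1) / n.factorial| =
          Real.Gamma (μ * n + 1) / n.factorial := by
        rw [abs_div, abs_mul, abs_pow, abs_neg, abs_one, one_pow, one_mul, Nat.abs_cast,
          abs_of_nonneg (Real.Gamma_nonneg_of_nonneg (by positivity))]
      rw [h1]
      have h2 : ‖zj j‖ ^ (-(μ * n + 1)) ≤ x ^ (-(μ * n + 1)) := by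
        rw [Real.rpow_neg (by positivity), Real.rpow_neg hx.le]
        have h3 : x ^ (μ * n + 1) ≤ ‖zj j‖ ^ (μ * n + 1) :=
          Real.rpow_le_rpow hx.le (hzjabs j) (by positivity)
        exact inv_anti₀ (Real.rpow_pos_of_pos hx _) h3
      have h4 : (0:ℝ) ≤ Real.Gamma (μ * n + 1) / n.factorial := by positivity
      exact mul_le_mul_of_nonneg_left h2 h4
  have heq : (fun j : ℕ => ∫ t in Ioi (0:ℝ),
      Complex.exp (-((t ^ μ : ℝ) : ℂ)) * Complex.exp (-(zj j * t))) =
      (fun j : ℕ => ∑' n : ℕ,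
        (((-1:ℝ) ^ n * Real.Gamma (μ * n + 1) / n.factorial : ℝ) : ℂ) *
          (zj j) ^ (-((μ * n + 1 : ℝ) : ℂ))) :=
    funext (fun j => series_rep hμ0 hμ1 (hzjrepos j))
  rw [heq] at hL
  exact tendsto_nhds_unique hL hR

lemma integrableOn_neg_Iic {f : ℝ → ℂ} (h : IntegrableOn (fun x => f (-x)) (Ioi (0:ℝ))) :
    IntegrableOn f (Iic (0:ℝ)) := by
  have A : MeasurableEmbedding fun x : ℝ => -x :=
    (Homeomorph.neg ℝ).isClosedEmbedding.measurableEmbedding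
  have h' : IntegrableOn (fun x => f (-x)) (Ici (0:ℝ)) :=
    (integrableOn_Ici_iff_integrableOn_Ioi enorm_ne_top).2 h
  have h2 : Integrable f (Measure.map (fun x : ℝ => -x) (volume.restrict (Ici 0))) :=
    A.integrable_map_iff.2 h'
  have h3 : Measure.map (fun x : ℝ => -x) ((volume : Measure ℝ).restrict (Ici 0)) =
      (volume : Measure ℝ).restrict (Iic 0) := by
    rw [show (Ici (0:ℝ)) = (fun x : ℝ => -x) ⁻¹' (Iic 0) by ext y; simp,
      ← Measure.restrict_map A.measurable measurableSet_Iic,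
      Measure.map_neg_eq_self (volume : Measure ℝ)]
  rwa [h3] at h2

end StableAux

open StableAux in
/-- Asymptotic series expansion of the symmetric stable density: for `0 < μ < 1` and `x > 0`,
`(1/2π) ∫ e^{-|k|^μ} e^{-ikx} dk = (1/π) Σ_{n≥1} ((-1)^{n+1}/n!) sin(πμn/2) Γ(μn+1) x^{-(μn+1)}`,
and the series converges absolutely. -/
theorem stmt5 (μ : ℝ) (hμ0 : 0 < μ) (hμ1 : μ < 1) (x : ℝ) (hx : 0 < x) :
    Summable (fun n : ℕ =>
      |((-1 : ℝ) ^ (n + 1 + 1) / (Nat.factorial (n + 1))) *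
        Real.sin (π * μ * (n + 1) / 2) * Real.Gamma (μ * (n + 1) + 1) *
        x ^ (-(μ * (n + 1) + 1))|) ∧
    (1 / (2 * π) : ℂ) * ∫ k : ℝ, Complex.exp (-((|k| ^ μ : ℝ) : ℂ)) *
        Complex.exp (-(Complex.I * (k : ℂ) * (x : ℂ))) =
      (((1 / π) * ∑' n : ℕ,
        ((-1 : ℝ) ^ (n + 1 + 1) / (Nat.factorial (n + 1))) *
          Real.sin (π * μ * (n + 1) / 2) * Real.Gamma (μ * (n + 1) + 1) *
          x ^ (-(μ * (n + 1) + 1)) : ℝ) : ℂ) := by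
  have hπ : (0:ℝ) < π := Real.pi_pos
  -- the real-terms sequence
  set R : ℕ → ℝ := fun m => ((-1:ℝ) ^ (m+1) / m.factorial) * Real.sin (π * μ * m / 2) *
    Real.Gamma (μ * m + 1) * x ^ (-(μ * m + 1)) with hR
  have habs : ‖-Complex.I * (x:ℂ)‖ = x := by
    rw [norm_mul, norm_neg, Complex.norm_I, Complex.norm_real, Real.norm_eq_abs, one_mul,
      abs_of_pos hx]
  have hwne : (-Complex.I * (x:ℂ)) ≠ 0 :=
    mul_ne_zero (neg_ne_zero.2 Complex.I_ne_zero) (Complex.ofReal_ne_zero.2 hx.ne')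
  have hsum_bound := bound_summable hμ0 hμ1 hx
  -- norm bound for complex terms
  have hterm_norm : ∀ n : ℕ,
      ‖(((-1:ℝ) ^ n * Real.Gamma (μ * n + 1) / n.factorial : ℝ) : ℂ) *
        (-Complex.I * (x:ℂ)) ^ (-((μ * n + 1 : ℝ) : ℂ))‖ ≤
      Real.Gamma (μ * n + 1) / n.factorial * x ^ (-(μ * n + 1)) := by
    intro n
    rw [norm_mul, Complex.norm_real, Real.norm_eq_abs,
      Complex.norm_cpow_of_ne_zero hwne]
    have him : (-((μ * n + 1 : ℝ) : ℂ)).im = 0 := by simp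
    have hre : (-((μ * n + 1 : ℝ) : ℂ)).re = -(μ * n + 1) := by simp
    rw [him, hre, mul_zero, Real.exp_zero, div_one, habs]
    have h1 : |(-1:ℝ) ^ n * Real.Gamma (μ * n + 1) / n.factorial| =
        Real.Gamma (μ * n + 1) / n.factorial := by
      rw [abs_div, abs_mul, abs_pow, abs_neg, abs_one, one_pow, one_mul, Nat.abs_cast,
        abs_of_nonneg (Real.Gamma_nonneg_of_nonneg (by positivity))]
    rw [h1]
  have hCsum : Summable (fun n : ℕ =>
      (((-1:ℝ) ^ n * Real.Gamma (μ * n + 1) / n.factorial : ℝ) : ℂ) *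
        (-Complex.I * (x:ℂ)) ^ (-((μ * n + 1 : ℝ) : ℂ))) := by
    refine Summable.of_norm ?_
    exact Summable.of_nonneg_of_le (fun n => norm_nonneg _) hterm_norm hsum_bound
  -- real part of each term
  have hterm_re : ∀ n : ℕ,
      ((((-1:ℝ) ^ n * Real.Gamma (μ * n + 1) / n.factorial : ℝ) : ℂ) *
        (-Complex.I * (x:ℂ)) ^ (-((μ * n + 1 : ℝ) : ℂ))).re = R n := by
    intro n
    rw [Complex.re_ofReal_mul]
    have hlog_re : (Complex.log (-Complex.I * (x:ℂ))).re = Real.log x := by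
      rw [Complex.log_re, habs]
    have hlog_im : (Complex.log (-Complex.I * (x:ℂ))).im = -(π/2) := by
      rw [Complex.log_im, mul_comm (-Complex.I) ((x:ℂ)), Complex.arg_real_mul _ hx,
        Complex.arg_neg_I]
    rw [Complex.cpow_def_of_ne_zero hwne, Complex.exp_re]
    have e1 : (Complex.log (-Complex.I * (x:ℂ)) * (-((μ * n + 1 : ℝ) : ℂ))).re =
        Real.log x * (-(μ * n + 1)) := by
      rw [Complex.mul_re, hlog_re, hlog_im]
      simp
    have e2 : (Complex.log (-Complex.I * (x:ℂ)) * (-((μ * n + 1 : ℝ) : ℂ))).im =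
        π * μ * n / 2 + π / 2 := by
      rw [Complex.mul_im, hlog_re, hlog_im]
      simp
      ring
    rw [e1, e2, Real.cos_add_pi_div_two,
      show Real.log x * (-(μ * n + 1)) = Real.log x * (-(μ * ↑n + 1)) by ring,
      ← Real.rpow_def_of_pos hx (-(μ * n + 1)), hR]
    simp only
    ring
  -- summability of |R|
  have habsR : Summable (fun n : ℕ => |R n|) := by
    refine Summable.of_nonneg_of_le (fun n => abs_nonneg _) (fun n => ?_) hsum_bound
    have h1 : |((-1:ℝ)) ^ (n+1) / n.factorial| = 1 / n.factorial := by
      rw [abs_div, abs_pow, abs_neg, abs_one, one_pow, Nat.abs_cast]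
    have h3 : |Real.Gamma (μ * n + 1)| = Real.Gamma (μ * n + 1) :=
      abs_of_nonneg (Real.Gamma_nonneg_of_nonneg (by positivity))
    have h4 : |x ^ (-(μ * n + 1))| = x ^ (-(μ * n + 1)) :=
      abs_of_nonneg (Real.rpow_nonneg hx.le _)
    calc |R n| = 1 / n.factorial * |Real.sin (π * μ * n / 2)| *
          Real.Gamma (μ * n + 1) * x ^ (-(μ * n + 1)) := by
          rw [hR]; simp only; rw [abs_mul, abs_mul, abs_mul, h1, h3, h4]
      _ ≤ 1 / n.factorial * 1 * Real.Gamma (μ * n + 1) * x ^ (-(μ * n + 1)) := by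
          have h2 : |Real.sin (π * μ * n / 2)| ≤ 1 := Real.abs_sin_le_one _
          have hnn1 : (0:ℝ) ≤ 1 / n.factorial := by positivity
          have hnn2 : (0:ℝ) ≤ Real.Gamma (μ * n + 1) :=
            Real.Gamma_nonneg_of_nonneg (by positivity)
          have hnn3 : (0:ℝ) ≤ x ^ (-(μ * n + 1)) := Real.rpow_nonneg hx.le _
          gcongr
      _ = Real.Gamma (μ * n + 1) / n.factorial * x ^ (-(μ * n + 1)) := by ring
  have hRsum : Summable R := Summable.of_abs habsR
  -- statement terms are R ∘ (·+1)
  have hstmt_eq : ∀ n : ℕ,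
      ((-1 : ℝ) ^ (n + 1 + 1) / (Nat.factorial (n + 1))) *
        Real.sin (π * μ * (n + 1) / 2) * Real.Gamma (μ * (n + 1) + 1) *
        x ^ (-(μ * (n + 1) + 1)) = R (n + 1) := by
    intro n
    rw [hR]
    simp only
    push_cast
    ring_nf
  constructor
  · refine ((summable_nat_add_iff 1).2 habsR).congr (fun n => ?_)
    rw [hstmt_eq n]
  -- main equality
  have hIntExp := StableAux.integrableOn_exp_neg_rpow hμ0
  set h : ℝ → ℂ := fun k => Complex.exp (-((|k| ^ μ : ℝ) : ℂ)) *
      Complex.exp (-(Complex.I * (k : ℂ) * (x : ℂ))) with hh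
  have hcont : Continuous h := by
    refine Continuous.mul ?_ ?_
    · exact Complex.continuous_exp.comp
        ((Complex.continuous_ofReal.comp
          (continuous_abs.rpow_const (fun k => Or.inr hμ0.le))).neg)
    · exact Complex.continuous_exp.comp (by fun_prop)
  have hnormh : ∀ k, ‖h k‖ = Real.exp (-(|k| ^ μ)) := by
    intro k
    rw [hh]
    simp only
    rw [norm_mul, Complex.norm_exp, Complex.norm_exp]
    have h1 : (-((|k| ^ μ : ℝ) : ℂ)).re = -(|k| ^ μ) := by simp
    have h2 : (-(Complex.I * (k:ℂ) * (x:ℂ))).re = 0 := by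
      simp [Complex.mul_re]
    rw [h1, h2, Real.exp_zero, mul_one]
  have hIoi : IntegrableOn h (Ioi 0) := by
    refine Integrable.mono' hIntExp hcont.aestronglyMeasurable.restrict ?_
    filter_upwards [self_mem_ae_restrict measurableSet_Ioi] with k hk
    rw [mem_Ioi] at hk
    rw [hnormh k, abs_of_pos hk]
  have hIoi' : IntegrableOn (fun k => h (-k)) (Ioi 0) := by
    refine Integrable.mono' hIntExp
      ((hcont.comp continuous_neg).aestronglyMeasurable.restrict) ?_
    filter_upwards [self_mem_ae_restrict measurableSet_Ioi] with k hk
    rw [mem_Ioi] at hk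
    rw [hnormh (-k), abs_neg, abs_of_pos hk]
  have hIic : IntegrableOn h (Iic 0) := StableAux.integrableOn_neg_Iic hIoi'
  set C₀ : ℂ := ∫ t in Ioi (0:ℝ), Complex.exp (-((t ^ μ : ℝ) : ℂ)) *
      Complex.exp (-((-Complex.I * (x:ℂ)) * t)) with hC₀
  have hIoi_val : ∫ k in Ioi (0:ℝ), h k = (starRingEnd ℂ) C₀ := by
    rw [hC₀, ← integral_conj]
    refine setIntegral_congr_fun measurableSet_Ioi (fun k hk => ?_)
    rw [mem_Ioi] at hk
    rw [hh]
    simp only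
    rw [map_mul, ← Complex.exp_conj, ← Complex.exp_conj, abs_of_pos hk]
    congr 2
    · rw [map_neg, Complex.conj_ofReal]
    · rw [map_neg, map_mul, map_mul, map_neg, Complex.conj_I, Complex.conj_ofReal,
        Complex.conj_ofReal]
      ring
  have hIic_val : ∫ k in Iic (0:ℝ), h k = C₀ := by
    have e1 := integral_comp_neg_Ioi 0 h
    rw [neg_zero] at e1
    rw [← e1, hC₀]
    refine setIntegral_congr_fun measurableSet_Ioi (fun k hk => ?_)
    rw [mem_Ioi] at hk
    rw [hh]
    simp only
    rw [abs_neg, abs_of_pos hk]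
    congr 1
    push_cast
    ring
  have hfull : ∫ k : ℝ, h k = ((2 * C₀.re : ℝ) : ℂ) := by
    rw [← intervalIntegral.integral_Iic_add_Ioi hIic hIoi, hIic_val, hIoi_val,
      Complex.add_conj]
  -- C₀ as a series
  have hrep : C₀ = ∑' n : ℕ, (((-1:ℝ) ^ n * Real.Gamma (μ * n + 1) / n.factorial : ℝ) : ℂ) *
      (-Complex.I * (x:ℂ)) ^ (-((μ * n + 1 : ℝ) : ℂ)) := by
    rw [hC₀]
    exact StableAux.series_rep_limit hμ0 hμ1 hx
  have hC₀re : C₀.re = ∑' n : ℕ, R n := by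
    rw [hrep]
    have := Complex.reCLM.map_tsum hCsum
    calc (∑' n : ℕ, (((-1:ℝ) ^ n * Real.Gamma (μ * n + 1) / n.factorial : ℝ) : ℂ) *
        (-Complex.I * (x:ℂ)) ^ (-((μ * n + 1 : ℝ) : ℂ))).re
        = ∑' n : ℕ, ((((-1:ℝ) ^ n * Real.Gamma (μ * n + 1) / n.factorial : ℝ) : ℂ) *
          (-Complex.I * (x:ℂ)) ^ (-((μ * n + 1 : ℝ) : ℂ))).re := this
      _ = ∑' n : ℕ, R n := tsum_congr hterm_re
  have hR0 : R 0 = 0 := by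
    rw [hR]
    simp
  have hTsum : C₀.re = ∑' n : ℕ,
      ((-1 : ℝ) ^ (n + 1 + 1) / (Nat.factorial (n + 1))) *
        Real.sin (π * μ * (n + 1) / 2) * Real.Gamma (μ * (n + 1) + 1) *
        x ^ (-(μ * (n + 1) + 1)) := by
    rw [hC₀re, hRsum.tsum_eq_zero_add, hR0, zero_add]
    exact (tsum_congr (fun n => hstmt_eq n)).symm
  rw [show (∫ k : ℝ, Complex.exp (-((|k| ^ μ : ℝ) : ℂ)) *
      Complex.exp (-(Complex.I * (k : ℂ) * (x : ℂ)))) = ∫ k : ℝ, h k by rw [hh], hfull,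
    ← hTsum]
  rw [show ((1 / π : ℝ) * C₀.re : ℝ) = C₀.re / π by ring]
  rw [Complex.ofReal_mul, Complex.ofReal_div]
  field_simp [Complex.ofReal_ne_zero.2 hπ.ne']
  push_cast; ring
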